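/- Let p_0,…,p_N ≥ 0 with not all of p_1,…,p_{N−1} zero (i.e., the state is not supported only on indices 0 and N). If both Hankel matrices M_0 = (p_{i+j}) and M_1 = (p_{i+j+1}) (of maximal sizes ⌊N/2⌋+1 and ⌈N/2⌉ respectively) are positive semidefinite, then p_k > 0 for every k = 0, 1, …, N. -/

import Mathlib

open scoped BigOperators

noncomputable section

/-- Number of ones (excitations) in an `N`-bit string. -/
def ones {N : ℕ} (f : Fin N → Fin 2) : ℕ :=
  (Finset.univ.filter fun i => f i = 1).card

/-- The Dicke state `|D_k^N⟩` as a real vector in `(ℂ²)^{⊗N}` (it has real coordinates). -/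
def dicke (N k : ℕ) : (Fin N → Fin 2) → ℝ :=
  fun f => if ones f = k then (Real.sqrt (N.choose k))⁻¹ else 0

/-- The rank-one projector `|D_k^N⟩⟨D_k^N|`. -/
def dickeProj (N k : ℕ) : Matrix (Fin N → Fin 2) (Fin N → Fin 2) ℝ :=
  fun x y => dicke N k x * dicke N k y

/-- The diagonal symmetric state `ρ_DS = ∑_k p_k |D_k^N⟩⟨D_k^N|`. -/
def rhoDS (N : ℕ) (p : ℕ → ℝ) : Matrix (Fin N → Fin 2) (Fin N → Fin 2) ℝ :=
  ∑ k ∈ Finset.range (N + 1), p k • dickeProj N k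

/-- Partial transpose with respect to the first `t` qubits. -/
def ptrans (N t : ℕ) (M : Matrix (Fin N → Fin 2) (Fin N → Fin 2) ℝ) :
    Matrix (Fin N → Fin 2) (Fin N → Fin 2) ℝ :=
  fun x y => M (fun i => if (i : ℕ) < t then y i else x i)
               (fun i => if (i : ℕ) < t then x i else y i)

/-- The `n × n` Hankel matrix with `(i,j)` entry `p (i + j + k)`. -/
def hankel (p : ℕ → ℝ) (k n : ℕ) : Matrix (Fin n) (Fin n) ℝ :=
  fun i j => p ((i : ℕ) + (j : ℕ) + k)

/-- In a real PSD matrix, a zero diagonal entry kills its whole row. -/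
lemma psd_entry_zero {n : ℕ} {M : Matrix (Fin n) (Fin n) ℝ} (h : M.PosSemidef)
    {i : Fin n} (hi : M i i = 0) (j : Fin n) : M i j = 0 := by
  obtain ⟨B, rfl⟩ : ∃ B : Matrix (Fin n) (Fin n) ℝ, M = B.conjTranspose * B := by
    open scoped MatrixOrder Matrix.Norms.L2Operator in
    simpa [Matrix.star_eq_conjTranspose] using CStarAlgebra.nonneg_iff_eq_star_mul_self.mp h.nonneg
  have hsum : ∑ l, B l i * B l i = 0 := by
    simpa [Matrix.mul_apply, Matrix.conjTranspose_apply] using hi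
  have hcol : ∀ l : Fin n, B l i = 0 := by
    intro l
    have := (Finset.sum_eq_zero_iff_of_nonneg
      (fun l _ => mul_self_nonneg (B l i))).mp hsum l (Finset.mem_univ l)
    exact mul_self_eq_zero.mp this
  simp [Matrix.mul_apply, Matrix.conjTranspose_apply, hcol]

/-- Let `p_0,…,p_N ≥ 0` with some `p_k ≠ 0` for `0 < k < N`. If both maximal
Hankel matrices `M₀ = (p_{i+j})` (size `⌊N/2⌋+1`) and `M₁ = (p_{i+j+1})` (size `⌈N/2⌉`)
are positive semidefinite, then `p_k > 0` for every `k = 0,…,N`. -/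
theorem stmt2 (N : ℕ) (p : ℕ → ℝ) (hp : ∀ k, 0 ≤ p k)
    (hnontriv : ∃ k, 0 < k ∧ k < N ∧ p k ≠ 0)
    (h0 : (hankel p 0 (N / 2 + 1)).PosSemidef)
    (h1 : (hankel p 1 ((N + 1) / 2)).PosSemidef) :
    ∀ k ≤ N, 0 < p k := by
  obtain ⟨k0, hk0pos, hk0N, hk0ne⟩ := hnontriv
  have N2 : 2 ≤ N := by omega
  -- propagation from zero diagonal entries of the two Hankel matrices
  have key0 : ∀ i j : ℕ, i ≤ N / 2 → j ≤ N / 2 → p (i + i) = 0 → p (i + j) = 0 := by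
    intro i j hi hj hz
    have hd : hankel p 0 (N / 2 + 1) ⟨i, by omega⟩ ⟨i, by omega⟩ = 0 := by
      simpa [hankel] using hz
    have := psd_entry_zero h0 hd ⟨j, by omega⟩
    simpa [hankel] using this
  have key1 : ∀ i j : ℕ, i < (N + 1) / 2 → j < (N + 1) / 2 →
      p (i + i + 1) = 0 → p (i + j + 1) = 0 := by
    intro i j hi hj hz
    have hd : hankel p 1 ((N + 1) / 2) ⟨i, hi⟩ ⟨i, hi⟩ = 0 := by
      simpa [hankel] using hz
    have := psd_entry_zero h1 hd ⟨j, hj⟩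
    simpa [hankel] using this
  -- any zero among p_0,…,p_N forces p_1 = 0
  have down : ∀ m, m ≤ N → p m = 0 → p 1 = 0 := by
    intro m
    induction m using Nat.strong_induction_on with
    | _ m ih =>
      intro hm hz
      rcases Nat.even_or_odd m with ⟨i, hi⟩ | ⟨i, hi⟩
      · subst hi
        rcases Nat.eq_zero_or_pos i with rfl | hipos
        · have := key0 0 1 (by omega) (by omega) hz
          simpa using this
        · have hpi : p i = 0 := by
            have := key0 i 0 (by omega) (by omega) hz
            simpa using this
          exact ih i (by omega) (by omega) hpi
      · rcases Nat.eq_zero_or_pos i with rfl | hipos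
        · rw [hi] at hz; simpa using hz
        · have hz' : p (i + i + 1) = 0 := by
            have : 2 * i + 1 = i + i + 1 := by ring
            rwa [hi, this] at hz
          have hpi : p (i + 1) = 0 := by
            have := key1 i 0 (by omega) (by omega) hz'
            simpa using this
          exact ih (i + 1) (by omega) (by omega) hpi
  -- conclusion
  intro k hk
  rcases (hp k).lt_or_eq with h | h
  · exact h
  · exfalso
    have p1 : p 1 = 0 := down k hk h.symm
    -- propagate zeros upward: p_t = 0 for all 1 ≤ t ≤ N - 1
    have up : ∀ t, 1 ≤ t → t ≤ N - 1 → p t = 0 := by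
      intro t
      induction t with
      | zero => omega
      | succ s ih =>
        intro h1 h2
        rcases Nat.eq_zero_or_pos s with rfl | hspos
        · exact p1
        · have ps : p s = 0 := ih hspos (by omega)
          rcases Nat.even_or_odd s with ⟨i, hi⟩ | ⟨i, hi⟩
          · have := key0 i (i + 1) (by omega) (by omega) (by rwa [← hi])
            have he : i + (i + 1) = s + 1 := by omega
            rwa [he] at this
          · have hz' : p (i + i + 1) = 0 := by
              have : 2 * i + 1 = i + i + 1 := by ring
              rwa [hi, this] at ps
            have := key1 i (i + 1) (by omega) (by omega) hz'
            have he : i + (i + 1) + 1 = s + 1 := by omega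
            rwa [he] at this
    exact hk0ne (up k0 hk0pos (by omega))
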